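/- Let p be an odd prime number and n a positive integer. Define f_{2ⁿ}(p) = min{ f ∈ ℤ_{≥1} : p^f ≡ ±1 (mod 2ⁿ) }. Then f_{2ⁿ}(p) = 1 if n < ν₂(p² − 1), and f_{2ⁿ}(p) = 2^{n − ν₂(p² − 1) + 1} if n ≥ ν₂(p² − 1). -/

import Mathlib

section Aux
variable {p : ℕ}

private lemma odd_geom_sum (hodd : Odd p) {f : ℕ} (hf : Odd f) :
    ¬ 2 ∣ ∑ i ∈ Finset.range f, p ^ i := by
  rw [Nat.two_dvd_ne_zero, Finset.sum_nat_mod]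
  have : ∀ i ∈ Finset.range f, p ^ i % 2 = 1 := by
    intro i _
    simp [Nat.pow_mod, Nat.odd_iff.mp hodd]
  rw [Finset.sum_congr rfl this, Finset.sum_const, Finset.card_range, smul_eq_mul, mul_one,
    Nat.odd_iff.mp hf]

private lemma val_sub_one_of_odd (hp3 : 3 ≤ p) (hodd : Odd p) {f : ℕ} (hf : Odd f) :
    padicValNat 2 (p ^ f - 1) = padicValNat 2 (p - 1) := by
  have key : (∑ i ∈ Finset.range f, p ^ i) * (p - 1) = p ^ f - 1 :=
    geom_sum_mul_of_one_le (by omega) f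
  have hs : ∑ i ∈ Finset.range f, p ^ i ≠ 0 := by
    intro h; exact odd_geom_sum hodd hf (h ▸ dvd_zero 2)
  have := Fact.mk Nat.prime_two
  rw [← key, padicValNat.mul hs (by omega),
    padicValNat.eq_zero_of_not_dvd (odd_geom_sum hodd hf), zero_add]

private lemma val_sub_one_of_even (hp3 : 3 ≤ p) (hodd : Odd p) {f : ℕ} (hf : Even f)
    (hf0 : f ≠ 0) :
    padicValNat 2 (p ^ f - 1) + 1 =
      padicValNat 2 (p + 1) + padicValNat 2 (p - 1) + padicValNat 2 f := by
  have hm := Nat.odd_iff.mp hodd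
  have h := padicValNat.pow_two_sub_pow (x := p) (y := 1) (by omega)
    (by omega) (by omega : ¬ 2 ∣ p) hf0 hf
  simpa using h

private lemma val_add_one (hp3 : 3 ≤ p) (hodd : Odd p) {f : ℕ} (hf0 : f ≠ 0) :
    padicValNat 2 (p ^ f - 1) + padicValNat 2 (p ^ f + 1) =
      padicValNat 2 (p + 1) + padicValNat 2 (p - 1) + padicValNat 2 f := by
  have hpf : 3 ≤ p ^ f := by
    calc 3 ≤ p := hp3
    _ = p ^ 1 := (pow_one p).symm
    _ ≤ p ^ f := Nat.pow_le_pow_right (by omega) (by omega)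
  have key : p ^ (2 * f) - 1 = (p ^ f + 1) * (p ^ f - 1) := by
    rw [mul_comm 2 f, pow_mul]
    simpa using Nat.sq_sub_sq (p ^ f) 1
  have h2 := val_sub_one_of_even hp3 hodd (even_two_mul f) (by omega)
  have := Fact.mk Nat.prime_two
  rw [key, padicValNat.mul (by omega) (by omega),
    padicValNat.mul (two_ne_zero) hf0, padicValNat.self (by norm_num)] at h2
  omega

end Aux


/-- For an odd prime `p` and `n ≥ 1`, let `f_{2ⁿ}(p) = min {f ≥ 1 : p^f ≡ ±1 (mod 2ⁿ)}`.
Then `f_{2ⁿ}(p) = 1` if `n < ν₂(p² - 1)`, and `f_{2ⁿ}(p) = 2^(n - ν₂(p²-1) + 1)` if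
`n ≥ ν₂(p² - 1)`. -/
theorem min_pow_pm_one_mod_two_pow (p : ℕ) (hp : p.Prime) (hodd : Odd p) (n : ℕ) (hn : 0 < n) :
    (n < padicValNat 2 (p ^ 2 - 1) →
      sInf {f : ℕ | 0 < f ∧ ((p : ZMod (2 ^ n)) ^ f = 1 ∨ (p : ZMod (2 ^ n)) ^ f = -1)} = 1) ∧
    (padicValNat 2 (p ^ 2 - 1) ≤ n →
      sInf {f : ℕ | 0 < f ∧ ((p : ZMod (2 ^ n)) ^ f = 1 ∨ (p : ZMod (2 ^ n)) ^ f = -1)} =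
        2 ^ (n - padicValNat 2 (p ^ 2 - 1) + 1)) := by
  have fact2 := Fact.mk Nat.prime_two
  have hp2 : p % 2 = 1 := Nat.odd_iff.mp hodd
  have hple := hp.two_le
  have hp3 : 3 ≤ p := by omega
  set a := padicValNat 2 (p - 1) with ha
  set b := padicValNat 2 (p + 1) with hb
  have hsq : p ^ 2 - 1 = (p + 1) * (p - 1) := by simpa using Nat.sq_sub_sq p 1
  have hv : padicValNat 2 (p ^ 2 - 1) = b + a := by
    rw [hsq, padicValNat.mul (by omega) (by omega)]
  have ha1 : 1 ≤ a := one_le_padicValNat_of_dvd (by omega) (by omega)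
  have hb1 : 1 ≤ b := one_le_padicValNat_of_dvd (by omega) (by omega)
  have hmin : a = 1 ∨ b = 1 := by
    by_contra h
    push_neg at h
    have h4a : (2 : ℕ) ^ 2 ∣ p - 1 := (padicValNat_dvd_iff_le (by omega)).mpr (by omega)
    have h4b : (2 : ℕ) ^ 2 ∣ p + 1 := (padicValNat_dvd_iff_le (by omega)).mpr (by omega)
    omega
  have hpf3 : ∀ f : ℕ, 0 < f → 3 ≤ p ^ f := by
    intro f hf
    calc 3 ≤ p := hp3
    _ = p ^ 1 := (pow_one p).symm
    _ ≤ p ^ f := Nat.pow_le_pow_right (by omega) hf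
  have hchar : ∀ f : ℕ, 0 < f →
      (f ∈ {f : ℕ | 0 < f ∧ ((p : ZMod (2 ^ n)) ^ f = 1 ∨ (p : ZMod (2 ^ n)) ^ f = -1)} ↔
        (2 ^ n ∣ p ^ f - 1 ∨ 2 ^ n ∣ p ^ f + 1)) := by
    intro f hf
    have hpf : 1 ≤ p ^ f := by have := hpf3 f hf; omega
    simp only [Set.mem_setOf_eq, hf, true_and]
    constructor
    · rintro (h | h)
      · left
        rw [← Nat.cast_pow, ← Nat.cast_one, ZMod.natCast_eq_natCast_iff] at h
        exact (Nat.modEq_iff_dvd' hpf).mp h.symm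
      · right
        rw [← Nat.cast_pow, eq_neg_iff_add_eq_zero, ← Nat.cast_one, ← Nat.cast_add,
          ZMod.natCast_eq_zero_iff] at h
        exact h
    · rintro (h | h)
      · left
        rw [← Nat.cast_pow, ← Nat.cast_one, ZMod.natCast_eq_natCast_iff]
        exact ((Nat.modEq_iff_dvd' hpf).mpr h).symm
      · right
        rw [← Nat.cast_pow, eq_neg_iff_add_eq_zero, ← Nat.cast_one, ← Nat.cast_add,
          ZMod.natCast_eq_zero_iff]
        exact h
  rw [hv]
  constructor
  · intro hlt
    have h1mem : 1 ∈ {f : ℕ | 0 < f ∧ ((p : ZMod (2 ^ n)) ^ f = 1 ∨ (p : ZMod (2 ^ n)) ^ f = -1)} := by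
      rw [hchar 1 one_pos]
      rcases hmin with h | h
      · right
        rw [pow_one]
        exact (padicValNat_dvd_iff_le (by omega)).mpr (by omega)
      · left
        rw [pow_one]
        exact (padicValNat_dvd_iff_le (by omega)).mpr (by omega)
    have hle := Nat.sInf_le h1mem
    have hpos := (Nat.sInf_mem ⟨1, h1mem⟩).1
    omega
  · intro hge
    set k := n - (b + a) + 1 with hk
    -- membership of 2^k
    have hkpos : 1 ≤ k := by omega
    have hf0pos : 0 < 2 ^ k := Nat.pow_pos (by omega)
    have hf0even : Even ((2 : ℕ) ^ k) := Nat.even_pow.mpr ⟨even_two, by omega⟩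
    have hνf0 : padicValNat 2 (2 ^ k) = k := padicValNat.prime_pow k
    have hsub0 := val_sub_one_of_even hp3 hodd hf0even (by omega)
    rw [hνf0] at hsub0
    have hval0 : padicValNat 2 (p ^ 2 ^ k - 1) = n := by omega
    have hmem : 2 ^ k ∈ {f : ℕ | 0 < f ∧ ((p : ZMod (2 ^ n)) ^ f = 1 ∨ (p : ZMod (2 ^ n)) ^ f = -1)} := by
      rw [hchar _ hf0pos]
      left
      have h3 := hpf3 _ hf0pos
      exact (padicValNat_dvd_iff_le (by omega)).mpr (by omega)
    have hlb : ∀ f ∈ {f : ℕ | 0 < f ∧ ((p : ZMod (2 ^ n)) ^ f = 1 ∨ (p : ZMod (2 ^ n)) ^ f = -1)},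
        2 ^ k ≤ f := by
      intro f hfS
      have hfpos : 0 < f := hfS.1
      have h3 := hpf3 f hfpos
      rw [hchar f hfpos] at hfS
      have hadd := val_add_one hp3 hodd (f := f) (by omega)
      rcases Nat.even_or_odd f with hfe | hfo
      · have hsub := val_sub_one_of_even hp3 hodd hfe (by omega)
        rcases hfS with h | h
        · have := (padicValNat_dvd_iff_le (by omega : p ^ f - 1 ≠ 0)).mp h
          have hdvdf : 2 ^ k ∣ f := (padicValNat_dvd_iff_le (by omega)).mpr (by omega)
          exact Nat.le_of_dvd hfpos hdvdf
        · have := (padicValNat_dvd_iff_le (by omega : p ^ f + 1 ≠ 0)).mp h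
          omega
      · have hsub := val_sub_one_of_odd hp3 hodd hfo
        have hνf : padicValNat 2 f = 0 :=
          padicValNat.eq_zero_of_not_dvd (by have := Nat.odd_iff.mp hfo; omega)
        rcases hfS with h | h
        · have := (padicValNat_dvd_iff_le (by omega : p ^ f - 1 ≠ 0)).mp h
          omega
        · have := (padicValNat_dvd_iff_le (by omega : p ^ f + 1 ≠ 0)).mp h
          omega
    exact le_antisymm (Nat.sInf_le hmem) (hlb _ (Nat.sInf_mem ⟨_, hmem⟩))
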